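/- Let A be a closed subset of a real Hilbert space X, x̄ ∈ A, δ > 0, λ > 0 and q > 0. Suppose b ∉ A and ‖b−a‖^{q−2}·d(b−a, N^F_A(a)) ≥ δ for all a ∈ A ∩ B_λ(x̄) with ‖b−a‖^q < d^q(b,A) + qλδ. Then d^q(b,A) ≤ ‖b−x̄‖^q − qλδ. -/

import Mathlib

open Filter Topology Metric Asymptotics

/-- The Fréchet normal cone to `Ω` at `xbar` in a real Hilbert space (identified with its
dual): `{v : limsup_{Ω∋x→xbar, x≠xbar} ⟨v, x−xbar⟩/‖x−xbar‖ ≤ 0}`. -/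
def frechetNormal {X : Type*} [NormedAddCommGroup X] [InnerProductSpace ℝ X]
    (Ω : Set X) (xbar : X) : Set X :=
  {v : X | ∀ ε > (0 : ℝ), ∃ δ > (0 : ℝ), ∀ x ∈ Ω, x ≠ xbar → ‖x - xbar‖ < δ →
    (inner ℝ v (x - xbar) : ℝ) ≤ ε * ‖x - xbar‖}

section Aux

variable {X : Type*} [NormedAddCommGroup X] [InnerProductSpace ℝ X]

/-- positive scalar multiples of Fréchet normals are Fréchet normals -/
lemma frechetNormal_smul {A : Set X} {p v : X} (hv : v ∈ frechetNormal A p)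
    {t : ℝ} (ht : 0 < t) : t • v ∈ frechetNormal A p := by
  intro ε hε
  obtain ⟨d, hd, hP⟩ := hv (ε / t) (by positivity)
  refine ⟨d, hd, fun x hx hxp hxd => ?_⟩
  have h1 := hP x hx hxp hxd
  have h2 : (inner ℝ (t • v) (x - p) : ℝ) = t * inner ℝ v (x - p) := real_inner_smul_left v _ t
  rw [h2]
  calc t * (inner ℝ v (x - p) : ℝ) ≤ t * (ε / t * ‖x - p‖) :=
        mul_le_mul_of_nonneg_left h1 ht.le
    _ = ε * ‖x - p‖ := by field_simp
@[simp] lemma zero_mem_frechetNormal {A : Set X} {p : X} : (0:X) ∈ frechetNormal A p := by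
  intro ε hε
  exact ⟨1, one_pos, fun x hx hxp hxd => by
    simp [inner_zero_left]; positivity⟩

lemma lipschitz_sqrt_aux (a : ℝ) (ha : 0 < a) (h : X) :
    a ≤ Real.sqrt (‖h‖ ^ 2 + a ^ 2) ∧ ‖h‖ ≤ Real.sqrt (‖h‖ ^ 2 + a ^ 2) := by
  constructor
  · exact (Real.le_sqrt ha.le (by positivity)).mpr (le_add_of_nonneg_left (by positivity))
  · exact (Real.le_sqrt (norm_nonneg _) (by positivity)).mpr (by nlinarith)

/-- one-sided Taylor estimate for `h ↦ √(‖h‖² + a²)`. -/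
lemma sqrt_taylor (a : ℝ) (ha : 0 < a) (h Δ : X) :
    Real.sqrt (‖h + Δ‖ ^ 2 + a ^ 2) - Real.sqrt (‖h‖ ^ 2 + a ^ 2)
      ≤ (inner ℝ h Δ : ℝ) / Real.sqrt (‖h‖ ^ 2 + a ^ 2) + ‖Δ‖ ^ 2 / a := by
  set s : ℝ := Real.sqrt (‖h‖ ^ 2 + a ^ 2) with hs_def
  set s' : ℝ := Real.sqrt (‖h + Δ‖ ^ 2 + a ^ 2) with hs'_def
  set t : ℝ := (inner ℝ h Δ : ℝ) with ht_def
  obtain ⟨hs_a, hs_n⟩ := lipschitz_sqrt_aux a ha h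
  obtain ⟨hs'_a, hs'_n⟩ := lipschitz_sqrt_aux a ha (h + Δ)
  have hs_pos : 0 < s := lt_of_lt_of_le ha hs_a
  have hS : 0 < s + s' := by linarith
  have hS2a : 2 * a ≤ s + s' := by linarith
  have hssq : s ^ 2 = ‖h‖ ^ 2 + a ^ 2 := Real.sq_sqrt (by positivity)
  have hs'sq : s' ^ 2 = ‖h + Δ‖ ^ 2 + a ^ 2 := Real.sq_sqrt (by positivity)
  have hexp : ‖h + Δ‖ ^ 2 = ‖h‖ ^ 2 + 2 * t + ‖Δ‖ ^ 2 := norm_add_sq_real h Δ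
  have hdiff : (s' - s) * (s' + s) = 2 * t + ‖Δ‖ ^ 2 := by
    have e : (s' - s) * (s' + s) = s' ^ 2 - s ^ 2 := by ring
    rw [e, hs'sq, hssq, hexp]; ring
  have hts : |t| ≤ s * ‖Δ‖ := by
    calc |t| ≤ ‖h‖ * ‖Δ‖ := abs_real_inner_le_norm h Δ
      _ ≤ s * ‖Δ‖ := mul_le_mul_of_nonneg_right hs_n (norm_nonneg _)
  have hsd : |s' - s| ≤ ‖Δ‖ := by
    have habs : |‖h + Δ‖ - ‖h‖| ≤ ‖Δ‖ := by
      simpa using abs_norm_sub_norm_le (h + Δ) h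
    have hS' : 0 < s' + s := by linarith
    have e1 : |s' - s| * (s' + s) = |‖h + Δ‖ - ‖h‖| * (‖h + Δ‖ + ‖h‖) := by
      rw [← abs_of_pos hS', ← abs_mul, hdiff,
        show 2 * t + ‖Δ‖ ^ 2 = (‖h + Δ‖ - ‖h‖) * (‖h + Δ‖ + ‖h‖) by nlinarith [hexp],
        abs_mul, abs_of_nonneg (show (0:ℝ) ≤ ‖h + Δ‖ + ‖h‖ by positivity)]
    have e2 : |‖h + Δ‖ - ‖h‖| * (‖h + Δ‖ + ‖h‖) ≤ ‖Δ‖ * (s' + s) := by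
      calc |‖h + Δ‖ - ‖h‖| * (‖h + Δ‖ + ‖h‖) ≤ ‖Δ‖ * (‖h + Δ‖ + ‖h‖) :=
            mul_le_mul_of_nonneg_right habs (by positivity)
        _ ≤ ‖Δ‖ * (s' + s) := mul_le_mul_of_nonneg_left (by linarith) (norm_nonneg _)
    have e3 : |s' - s| * (s' + s) ≤ ‖Δ‖ * (s' + s) := by linarith
    exact le_of_mul_le_mul_right (by linarith) hS
  have G2 : -(a * (s * ‖Δ‖ * ‖Δ‖)) ≤ a * (t * (s' - s)) := by
    have habs2 : |t * (s' - s)| ≤ s * ‖Δ‖ * ‖Δ‖ := by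
      rw [abs_mul]
      calc |t| * |s' - s| ≤ (s * ‖Δ‖) * ‖Δ‖ :=
        mul_le_mul hts hsd (abs_nonneg _) (by positivity)
      _ = s * ‖Δ‖ * ‖Δ‖ := by ring
    have := neg_abs_le (t * (s' - s))
    have h2 : -(s * ‖Δ‖ * ‖Δ‖) ≤ t * (s' - s) := by linarith
    nlinarith
  have G3 : ‖Δ‖ ^ 2 * s * a ≤ ‖Δ‖ ^ 2 * s * (s + s' - a) := by
    have : a ≤ s + s' - a := by linarith
    have hn : (0:ℝ) ≤ ‖Δ‖ ^ 2 * s := by positivity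
    exact mul_le_mul_of_nonneg_left this hn
  have G1 : (t * a + ‖Δ‖ ^ 2 * s - (s' - s) * (s * a)) * (s' + s)
      = a * (t * (s' - s)) + ‖Δ‖ ^ 2 * s * (s + s' - a) := by
    linear_combination (-(s * a)) * hdiff
  have G4 : 0 ≤ (t * a + ‖Δ‖ ^ 2 * s - (s' - s) * (s * a)) * (s' + s) := by
    rw [G1]
    nlinarith
  have G5 : 0 ≤ t * a + ‖Δ‖ ^ 2 * s - (s' - s) * (s * a) := by
    by_contra hneg
    push_neg at hneg
    nlinarith
  have e4 : t / s + ‖Δ‖ ^ 2 / a = (t * a + ‖Δ‖ ^ 2 * s) / (s * a) := by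
    field_simp
  rw [e4, le_div_iff₀ (by positivity)]
  linarith


end Aux

set_option maxHeartbeats 1600000 in
/-- A Borwein–Preiss-type smooth variational principle, specialized form. -/
lemma bp_main {X : Type*} [NormedAddCommGroup X] [InnerProductSpace ℝ X] [CompleteSpace X]
    (A : Set X) (hA : IsClosed A) (xb : X) (hxb : xb ∈ A)
    (f : X → ℝ) (hf : Continuous f) (hf0 : ∀ x, 0 ≤ f x)
    (K a μ c0 : ℝ) (hK : 0 < K) (ha : 0 < a) (hμ0 : 0 < μ) (hμ1 : μ < 1) (hc0 : 0 < c0) :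
    ∃ p ∈ A, ∃ u : X,
      ‖u‖ ≤ K ∧
      f p + (1 - μ) * (K * (Real.sqrt (‖p - xb‖ ^ 2 + a ^ 2) - a)) ≤ f xb + c0 ∧
      ∀ x ∈ A, (inner ℝ u (x - p) : ℝ) ≤ f x - f p + K / a * ‖x - p‖ ^ 2 := by
  classical
  have h1μ : 0 < 1 - μ := by linarith
  have hμnn : 0 ≤ μ := hμ0.le
  -- the penalty function
  set G : X → ℝ := fun h => K * (Real.sqrt (‖h‖ ^ 2 + a ^ 2) - a) with hG_def
  have hGnn : ∀ h, 0 ≤ G h := fun h =>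
    mul_nonneg hK.le (by linarith [(lipschitz_sqrt_aux a ha h).1])
  have hG0 : G 0 = 0 := by
    simp [hG_def, Real.sqrt_sq ha.le]
  have hGcont : Continuous G := by
    apply continuous_const.mul
    apply Continuous.sub _ continuous_const
    apply Real.continuous_sqrt.comp
    continuity
  have hGub : ∀ h : X, G h ≤ K * ‖h‖ := by
    intro h
    have h1 : Real.sqrt (‖h‖ ^ 2 + a ^ 2) ≤ ‖h‖ + a := by
      have h2 : ‖h‖ ^ 2 + a ^ 2 ≤ (‖h‖ + a) ^ 2 := by nlinarith [norm_nonneg h]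
      calc Real.sqrt (‖h‖ ^ 2 + a ^ 2) ≤ Real.sqrt ((‖h‖ + a) ^ 2) := Real.sqrt_le_sqrt h2
        _ = ‖h‖ + a := Real.sqrt_sq (by positivity)
    simp only [hG_def]
    nlinarith
  -- the error tolerances
  set γ : ℕ → ℝ := fun k => (1 - μ) * μ ^ (k + 1) * (c0 / 2 * μ ^ k) with hγ_def
  have hγpos : ∀ k, 0 < γ k := fun k => by positivity
  have hγle : ∀ k, γ k ≤ (1 - μ) * (c0 / 2 * μ ^ k) := by
    intro k
    have h1 : μ ^ (k + 1) ≤ 1 := pow_le_one₀ hμnn hμ1.le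
    have h2 : (0:ℝ) ≤ c0 / 2 * μ ^ k := by positivity
    calc (1 - μ) * μ ^ (k + 1) * (c0 / 2 * μ ^ k) ≤ (1 - μ) * 1 * (c0 / 2 * μ ^ k) := by
          apply mul_le_mul_of_nonneg_right _ h2
          exact mul_le_mul_of_nonneg_left h1 h1μ.le
      _ = (1 - μ) * (c0 / 2 * μ ^ k) := by ring
  have hsummμ : Summable (fun k : ℕ => μ ^ k) := summable_geometric_of_lt_one hμnn hμ1
  have hgeom : ∀ n, ∑ k ∈ Finset.range n, μ ^ k ≤ (1 - μ)⁻¹ := by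
    intro n
    have h1 : ∑ k ∈ Finset.range n, μ ^ k ≤ ∑' k : ℕ, μ ^ k :=
      Summable.sum_le_tsum (Finset.range n) (fun k _ => by positivity) hsummμ
    rwa [tsum_geometric_of_lt_one hμnn hμ1] at h1
  have hγsum : ∀ n, ∑ k ∈ Finset.range n, γ k ≤ c0 / 2 := by
    intro n
    have h1 : ∑ k ∈ Finset.range n, γ k ≤ ∑ k ∈ Finset.range n, (1 - μ) * (c0 / 2 * μ ^ k) :=
      Finset.sum_le_sum fun k _ => hγle k
    have h2 : ∑ k ∈ Finset.range n, (1 - μ) * (c0 / 2 * μ ^ k)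
        = (1 - μ) * (c0 / 2) * ∑ k ∈ Finset.range n, μ ^ k := by
      rw [Finset.mul_sum]; apply Finset.sum_congr rfl; intros; ring
    have h3 := hgeom n
    have h4 : (1 - μ) * (c0 / 2) * ∑ k ∈ Finset.range n, μ ^ k
        ≤ (1 - μ) * (c0 / 2) * (1 - μ)⁻¹ := by
      apply mul_le_mul_of_nonneg_left h3 (by positivity)
    have h5 : (1 - μ) * (c0 / 2) * (1 - μ)⁻¹ = c0 / 2 := by field_simp
    linarith
  have hγ0 : Tendsto γ atTop (𝓝 0) := by
    apply squeeze_zero (fun k => (hγpos k).le) (fun k => hγle k)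
    have h1 : Tendsto (fun k : ℕ => μ ^ k) atTop (𝓝 0) :=
      tendsto_pow_atTop_nhds_zero_of_lt_one hμnn hμ1
    have := (h1.const_mul (c0 / 2)).const_mul (1 - μ)
    simpa using this
  -- the penalized functionals
  set Φ : (ℕ → X) → ℕ → X → ℝ := fun xs n y =>
    f y + (1 - μ) * ∑ k ∈ Finset.range (n + 1), μ ^ k * G (y - xs k) with hΦ_def
  have hΦnn : ∀ xs n y, 0 ≤ Φ xs n y := fun xs n y =>
    add_nonneg (hf0 y) (mul_nonneg h1μ.le
      (Finset.sum_nonneg fun k _ => mul_nonneg (by positivity) (hGnn _)))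
  have hbddA : ∀ (xs : ℕ → X) n, BddBelow (Φ xs n '' A) := fun xs n =>
    ⟨0, fun z hz => by obtain ⟨y, hy, rfl⟩ := hz; exact hΦnn _ _ _⟩
  have hneA : ∀ (xs : ℕ → X) n, (Φ xs n '' A).Nonempty := fun xs n =>
    ⟨_, Set.mem_image_of_mem _ hxb⟩
  have hsel : ∀ (n : ℕ) (xs : ℕ → X), ∃ y, y ∈ A ∧ Φ xs n y < sInf (Φ xs n '' A) + γ n := by
    intro n xs
    obtain ⟨z, hz, hlt⟩ := Real.lt_sInf_add_pos (hneA xs n) (hγpos n)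
    obtain ⟨y, hyA, rfl⟩ := hz
    exact ⟨y, hyA, hlt⟩
  choose FF hFA hFlt using hsel
  -- the recursively selected sequence
  let T : ℕ → ℕ → X := fun n => Nat.rec (fun _ => xb)
    (fun m prev => Function.update prev (m + 1) (FF m prev)) n
  set xs : ℕ → X := fun n => T n n with hxs_def
  have hxs0 : xs 0 = xb := rfl
  have hTsucc : ∀ n, T (n + 1) = Function.update (T n) (n + 1) (FF n (T n)) := fun n => rfl
  have hTagree : ∀ n k, k ≤ n → T n k = xs k := by
    intro n
    induction n with
    | zero =>
      intro k hk
      have hkk : k = 0 := Nat.le_zero.mp hk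
      subst hkk; rfl
    | succ n ih =>
      intro k hk
      by_cases hkn : k ≤ n
      · rw [hTsucc, Function.update_of_ne (by omega)]
        exact ih k hkn
      · have hkk : k = n + 1 := by omega
        subst hkk
        rfl
  have hΦT : ∀ n, Φ (T n) n = Φ xs n := by
    intro n
    funext y
    simp only [hΦ_def]
    congr 1
    congr 1
    apply Finset.sum_congr rfl
    intro k hk
    rw [hTagree n k (Nat.lt_succ_iff.mp (Finset.mem_range.mp hk))]
  have hxseq : ∀ n, xs (n + 1) = FF n (T n) := by
    intro n
    show T (n + 1) (n + 1) = _
    rw [hTsucc, Function.update_self]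
  have hxsA : ∀ n, xs (n + 1) ∈ A := fun n => by rw [hxseq]; exact hFA n (T n)
  have hxsAall : ∀ n, xs n ∈ A := by
    intro n
    cases n with
    | zero => exact hxb
    | succ n => exact hxsA n
  have hkey : ∀ n, Φ xs n (xs (n + 1)) < sInf (Φ xs n '' A) + γ n := by
    intro n
    have h2 := hFlt n (T n)
    rw [hΦT n] at h2
    rwa [← hxseq n] at h2
  set S : ℕ → ℝ := fun n => sInf (Φ xs n '' A) with hS_def
  have hSle : ∀ n x, x ∈ A → S n ≤ Φ xs n x := fun n x hx =>
    csInf_le (hbddA _ _) (Set.mem_image_of_mem _ hx)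
  have hΦsucc : ∀ n y, Φ xs (n + 1) y = Φ xs n y + (1 - μ) * (μ ^ (n + 1) * G (y - xs (n + 1))) := by
    intro n y
    simp only [hΦ_def, Finset.sum_range_succ]
    ring
  have hΦdiag : ∀ n, Φ xs (n + 1) (xs (n + 1)) = Φ xs n (xs (n + 1)) := by
    intro n
    rw [hΦsucc, sub_self, hG0]
    ring
  have hβstep : ∀ n, Φ xs (n + 1) (xs (n + 2)) ≤ Φ xs n (xs (n + 1)) + γ (n + 1) := by
    intro n
    have h1 := hkey (n + 1)
    have h2 := hSle (n + 1) (xs (n + 1)) (hxsA n)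
    have h3 := hΦdiag n
    linarith
  have hβbound : ∀ n, Φ xs n (xs (n + 1)) ≤ f xb + ∑ k ∈ Finset.range (n + 1), γ k := by
    intro n
    induction n with
    | zero =>
      have h1 := hkey 0
      have h2 := hSle 0 xb hxb
      have h3 : Φ xs 0 xb = f xb := by
        simp only [hΦ_def, zero_add, Finset.sum_range_one, pow_zero, one_mul, hxs0,
          sub_self, hG0, mul_zero, add_zero]
      rw [Finset.range_one, Finset.sum_singleton]
      linarith
    | succ n ih =>
      have h1 := hβstep n
      rw [Finset.sum_range_succ]
      linarith
  have hβc0 : ∀ n, Φ xs n (xs (n + 1)) ≤ f xb + c0 / 2 := fun n =>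
    le_trans (hβbound n) (by linarith [hγsum (n + 1)])
  -- geometric bound on the steps
  have hstepG : ∀ n, (1 - μ) * (μ ^ (n + 1) * G (xs (n + 2) - xs (n + 1))) ≤ γ n + γ (n + 1) := by
    intro n
    have h1 := hkey (n + 1)
    have h1' := hkey n
    have h2 := hSle n (xs (n + 2)) (hxsA (n + 1))
    have h3 := hΦsucc n (xs (n + 2))
    have h4 := hSle (n + 1) (xs (n + 1)) (hxsA n)
    have h5 := hΦdiag n
    linarith
  have hGstep : ∀ n, G (xs (n + 2) - xs (n + 1)) ≤ c0 * μ ^ n := by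
    intro n
    have h1 := hstepG n
    have h2 : γ n + γ (n + 1) ≤ (1 - μ) * (μ ^ (n + 1) * (c0 * μ ^ n)) := by
      simp only [hγ_def]
      have h3 : μ ^ (n + 2) * (c0 / 2 * μ ^ (n + 1)) ≤ μ ^ (n + 1) * (c0 / 2 * μ ^ n) := by
        have h4 : μ ^ (n + 2) * μ ^ (n + 1) ≤ μ ^ (n + 1) * μ ^ n := by
          rw [← pow_add, ← pow_add]
          exact pow_le_pow_of_le_one hμnn hμ1.le (by omega)
        nlinarith [pow_nonneg hμnn (n + 1), pow_nonneg hμnn n]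
      nlinarith [pow_nonneg hμnn (n + 1), pow_nonneg hμnn n, pow_nonneg hμnn (n + 2)]
    have h3 : 0 < (1 - μ) * μ ^ (n + 1) := by positivity
    have h4 : (1 - μ) * (μ ^ (n + 1) * G (xs (n + 2) - xs (n + 1)))
        = ((1 - μ) * μ ^ (n + 1)) * G (xs (n + 2) - xs (n + 1)) := by ring
    have h5 : (1 - μ) * (μ ^ (n + 1) * (c0 * μ ^ n)) = ((1 - μ) * μ ^ (n + 1)) * (c0 * μ ^ n) := by
      ring
    have h6 : ((1 - μ) * μ ^ (n + 1)) * G (xs (n + 2) - xs (n + 1))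
        ≤ ((1 - μ) * μ ^ (n + 1)) * (c0 * μ ^ n) := by
      rw [← h4, ← h5]; linarith
    exact le_of_mul_le_mul_left h6 h3
  -- bound ‖h‖ from a bound on G h
  have hGinv : ∀ (h : X) (t : ℝ), 0 ≤ t → G h ≤ t → ‖h‖ ^ 2 ≤ t / K * (2 * a + t / K) := by
    intro h t ht hGh
    have hs := lipschitz_sqrt_aux a ha h
    have hsq : Real.sqrt (‖h‖ ^ 2 + a ^ 2) ^ 2 = ‖h‖ ^ 2 + a ^ 2 := Real.sq_sqrt (by positivity)
    have h1 : Real.sqrt (‖h‖ ^ 2 + a ^ 2) ≤ a + t / K := by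
      have h2 : K * (Real.sqrt (‖h‖ ^ 2 + a ^ 2) - a) ≤ t := hGh
      have h3 : Real.sqrt (‖h‖ ^ 2 + a ^ 2) - a ≤ t / K := by
        rw [le_div_iff₀ hK]; nlinarith
      linarith
    nlinarith [hs.1]
  set σ : ℝ := Real.sqrt μ with hσ_def
  have hσnn : 0 ≤ σ := Real.sqrt_nonneg μ
  have hσsq : σ ^ 2 = μ := Real.sq_sqrt hμnn
  have hσ1 : σ < 1 := by
    rw [hσ_def, show (1:ℝ) = Real.sqrt 1 from Real.sqrt_one.symm]
    exact Real.sqrt_lt_sqrt hμnn hμ1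
  have hσpow : ∀ n : ℕ, σ ^ n * σ ^ n = μ ^ n := by
    intro n
    rw [← pow_add, ← two_mul, pow_mul', ← hσsq]
    ring
  set C : ℝ := Real.sqrt (c0 / K * (2 * a + c0 / K)) with hC_def
  have hCnn : 0 ≤ C := Real.sqrt_nonneg _
  have hstepnorm : ∀ n, ‖xs (n + 2) - xs (n + 1)‖ ≤ C * σ ^ n := by
    intro n
    have h1 := hGinv _ _ (by positivity) (hGstep n)
    have h2 : c0 * μ ^ n / K * (2 * a + c0 * μ ^ n / K) ≤ c0 / K * (2 * a + c0 / K) * μ ^ n := by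
      have hμn1 : μ ^ n ≤ 1 := pow_le_one₀ hμnn hμ1.le
      have hμnnn : 0 ≤ μ ^ n := pow_nonneg hμnn n
      have e1 : c0 * μ ^ n / K * (2 * a + c0 * μ ^ n / K)
          = μ ^ n * (c0 / K) * (2 * a) + μ ^ n * μ ^ n * (c0 / K) ^ 2 := by ring
      have e2 : c0 / K * (2 * a + c0 / K) * μ ^ n
          = μ ^ n * (c0 / K) * (2 * a) + μ ^ n * (c0 / K) ^ 2 := by ring
      rw [e1, e2]
      have h3 : μ ^ n * μ ^ n ≤ μ ^ n := mul_le_of_le_one_left hμnnn hμn1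
      have h4' := mul_le_mul_of_nonneg_right h3 (sq_nonneg (c0 / K))
      linarith
    have h4 : ‖xs (n + 2) - xs (n + 1)‖ ^ 2 ≤ (C * σ ^ n) ^ 2 := by
      have h5 : (C * σ ^ n) ^ 2 = c0 / K * (2 * a + c0 / K) * μ ^ n := by
        have h6 : C ^ 2 = c0 / K * (2 * a + c0 / K) := Real.sq_sqrt (by positivity)
        calc (C * σ ^ n) ^ 2 = C ^ 2 * (σ ^ n * σ ^ n) := by ring
          _ = c0 / K * (2 * a + c0 / K) * μ ^ n := by rw [h6, hσpow]
      rw [h5]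
      linarith
    have h7 : 0 ≤ C * σ ^ n := by positivity
    calc ‖xs (n + 2) - xs (n + 1)‖ = Real.sqrt (‖xs (n + 2) - xs (n + 1)‖ ^ 2) :=
          (Real.sqrt_sq (norm_nonneg _)).symm
      _ ≤ Real.sqrt ((C * σ ^ n) ^ 2) := Real.sqrt_le_sqrt h4
      _ = C * σ ^ n := Real.sqrt_sq h7
  -- the sequence converges
  have hcau : CauchySeq (fun n => xs (n + 1)) := by
    apply cauchySeq_of_le_geometric σ C hσ1
    intro n
    rw [dist_eq_norm, norm_sub_rev]
    exact hstepnorm n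
  obtain ⟨p, hptend⟩ := cauchySeq_tendsto_of_complete hcau
  have hpA : p ∈ A := hA.mem_of_tendsto hptend (Eventually.of_forall fun n => hxsA n)
  -- a uniform bound on the sequence
  set B : ℝ := C * (1 - σ)⁻¹ + ‖xs 1 - xb‖ with hB_def
  have hBn : ∀ k, ‖xs k - xb‖ ≤ B := by
    have hgeoσ : ∀ n, ∑ i ∈ Finset.range n, σ ^ i ≤ (1 - σ)⁻¹ := by
      intro n
      have h1 : ∑ i ∈ Finset.range n, σ ^ i ≤ ∑' i : ℕ, σ ^ i :=
        Summable.sum_le_tsum (Finset.range n) (fun k _ => by positivity)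
          (summable_geometric_of_lt_one hσnn hσ1)
      rwa [tsum_geometric_of_lt_one hσnn hσ1] at h1
    intro k
    cases k with
    | zero =>
      rw [hxs0, sub_self, norm_zero]
      have : 0 ≤ C * (1 - σ)⁻¹ := by
        have : 0 < (1 - σ)⁻¹ := by rw [inv_pos]; linarith
        positivity
      rw [hB_def]
      positivity
    | succ k =>
      have h1 : dist (xs 1) (xs (k + 1)) ≤ ∑ i ∈ Finset.range k, dist (xs (i + 1)) (xs (i + 2)) := by
        have := dist_le_range_sum_dist (fun n => xs (n + 1)) k
        simpa using this
      have h2 : ∑ i ∈ Finset.range k, dist (xs (i + 1)) (xs (i + 2))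
          ≤ ∑ i ∈ Finset.range k, C * σ ^ i := by
        apply Finset.sum_le_sum
        intro i hi
        rw [dist_eq_norm, norm_sub_rev]
        exact hstepnorm i
      have h3 : ∑ i ∈ Finset.range k, C * σ ^ i = C * ∑ i ∈ Finset.range k, σ ^ i := by
        rw [Finset.mul_sum]
      have h4 : C * ∑ i ∈ Finset.range k, σ ^ i ≤ C * (1 - σ)⁻¹ :=
        mul_le_mul_of_nonneg_left (hgeoσ k) hCnn
      have h5 : ‖xs (k + 1) - xb‖ ≤ ‖xs (k + 1) - xs 1‖ + ‖xs 1 - xb‖ := by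
        calc ‖xs (k + 1) - xb‖ = ‖(xs (k + 1) - xs 1) + (xs 1 - xb)‖ := by congr 1; abel
          _ ≤ _ := norm_add_le _ _
      have h6 : ‖xs (k + 1) - xs 1‖ = dist (xs 1) (xs (k + 1)) := by
        rw [dist_eq_norm, norm_sub_rev]
      rw [hB_def]
      rw [h6] at h5
      linarith
  -- summability of the penalty series
  have hsumG : ∀ z : X, Summable (fun k => μ ^ k * G (z - xs k)) := by
    intro z
    apply Summable.of_nonneg_of_le (fun k => mul_nonneg (by positivity) (hGnn _)) (fun k => ?_)
      (hsummμ.mul_right (K * (‖z - xb‖ + B)))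
    have h1 : G (z - xs k) ≤ K * (‖z - xb‖ + B) := by
      have h2 : ‖z - xs k‖ ≤ ‖z - xb‖ + B := by
        calc ‖z - xs k‖ = ‖(z - xb) + (xb - xs k)‖ := by congr 1; abel
          _ ≤ ‖z - xb‖ + ‖xb - xs k‖ := norm_add_le _ _
          _ ≤ ‖z - xb‖ + B := by rw [norm_sub_rev xb (xs k)]; linarith [hBn k]
      calc G (z - xs k) ≤ K * ‖z - xs k‖ := hGub _
        _ ≤ K * (‖z - xb‖ + B) := mul_le_mul_of_nonneg_left h2 hK.le
    exact mul_le_mul_of_nonneg_left h1 (by positivity)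
  set Ψ : X → ℝ := fun z => f z + (1 - μ) * ∑' k, μ ^ k * G (z - xs k) with hΨ_def
  have hΦleΨ : ∀ n z, Φ xs n z ≤ Ψ z := by
    intro n z
    have h1 : ∑ k ∈ Finset.range (n + 1), μ ^ k * G (z - xs k) ≤ ∑' k, μ ^ k * G (z - xs k) :=
      Summable.sum_le_tsum (Finset.range (n + 1)) (fun k _ => mul_nonneg (pow_nonneg hμnn k) (hGnn _))
        (hsumG z)
    have h2 := mul_le_mul_of_nonneg_left h1 h1μ.le
    simp only [hΦ_def, hΨ_def]
    linarith
  have hΦmono : ∀ m n z, m ≤ n → Φ xs m z ≤ Φ xs n z := by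
    intro m n z hmn
    have h1 : ∑ k ∈ Finset.range (m + 1), μ ^ k * G (z - xs k)
        ≤ ∑ k ∈ Finset.range (n + 1), μ ^ k * G (z - xs k) :=
      Finset.sum_le_sum_of_subset_of_nonneg
        (Finset.range_subset_range.mpr (by omega))
        (fun k _ _ => mul_nonneg (by positivity) (hGnn _))
    have h2 := mul_le_mul_of_nonneg_left h1 h1μ.le
    simp only [hΦ_def]
    linarith
  have hΦcont : ∀ n, Continuous (Φ xs n) := by
    intro n
    apply hf.add
    apply continuous_const.mul
    apply continuous_finset_sum
    intro k _
    exact continuous_const.mul (hGcont.comp (continuous_id.sub continuous_const))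
  have hΦtend : ∀ m, Tendsto (fun k => Φ xs m (xs (k + 1))) atTop (𝓝 (Φ xs m p)) :=
    fun m => ((hΦcont m).tendsto p).comp hptend
  -- minimality of `p` for `Ψ` on `A`
  have hm : ∀ (m : ℕ) (x : X), x ∈ A → Φ xs m p ≤ Ψ x := by
    intro m x hx
    have hev : ∀ k, m ≤ k → Φ xs m (xs (k + 1)) ≤ Ψ x + γ k := by
      intro k hk
      calc Φ xs m (xs (k + 1)) ≤ Φ xs k (xs (k + 1)) := hΦmono m k _ hk
        _ ≤ S k + γ k := (hkey k).le
        _ ≤ Φ xs k x + γ k := by linarith [hSle k x hx]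
        _ ≤ Ψ x + γ k := by linarith [hΦleΨ k x]
    have ht2 : Tendsto (fun k => Ψ x + γ k) atTop (𝓝 (Ψ x)) := by
      simpa using tendsto_const_nhds.add hγ0
    exact le_of_tendsto_of_tendsto (hΦtend m) ht2 (eventually_atTop.mpr ⟨m, hev⟩)
  have htmΨ : Tendsto (fun m => Φ xs m p) atTop (𝓝 (Ψ p)) := by
    have h1 : Tendsto (fun n => ∑ k ∈ Finset.range n, μ ^ k * G (p - xs k)) atTop
        (𝓝 (∑' k, μ ^ k * G (p - xs k))) := (hsumG p).hasSum.tendsto_sum_nat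
    have h2 : Tendsto (fun m : ℕ => m + 1) atTop atTop := tendsto_add_atTop_nat 1
    have h3 := h1.comp h2
    have h4 := (h3.const_mul (1 - μ)).const_add (f p)
    simpa only [hΦ_def, hΨ_def, Function.comp] using h4
  have hmin : ∀ x ∈ A, Ψ p ≤ Ψ x := fun x hx =>
    le_of_tendsto htmΨ (Eventually.of_forall fun m => hm m x hx)
  have hbudget0 : Φ xs 0 p ≤ f xb + c0 / 2 := by
    have hev : ∀ k, Φ xs 0 (xs (k + 1)) ≤ f xb + c0 / 2 := fun k =>
      le_trans (hΦmono 0 k _ (Nat.zero_le k)) (hβc0 k)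
    exact le_of_tendsto (hΦtend 0) (Eventually.of_forall hev)
  -- the gradient vector
  set v : ℕ → X := fun k => (K / Real.sqrt (‖p - xs k‖ ^ 2 + a ^ 2)) • (p - xs k) with hv_def
  have hspos : ∀ k, 0 < Real.sqrt (‖p - xs k‖ ^ 2 + a ^ 2) := fun k =>
    lt_of_lt_of_le ha (lipschitz_sqrt_aux a ha _).1
  have hvnorm : ∀ k, ‖v k‖ ≤ K := by
    intro k
    have h1 := (lipschitz_sqrt_aux a ha (p - xs k)).2
    have h2 := hspos k
    have h3 : ‖v k‖ = K / Real.sqrt (‖p - xs k‖ ^ 2 + a ^ 2) * ‖p - xs k‖ := by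
      simp only [hv_def]
      rw [norm_smul, Real.norm_eq_abs, abs_of_pos (div_pos hK h2)]
    rw [h3, div_mul_eq_mul_div, div_le_iff₀ h2]
    have h4 := mul_le_mul_of_nonneg_left h1 hK.le
    linarith
  have hnormle : ∀ k, ‖μ ^ k • v k‖ ≤ μ ^ k * K := by
    intro k
    rw [norm_smul, Real.norm_eq_abs, abs_of_nonneg (by positivity)]
    exact mul_le_mul_of_nonneg_left (hvnorm k) (by positivity)
  have hsumv : Summable (fun k => μ ^ k • v k) :=
    Summable.of_norm_bounded (g := fun k => μ ^ k * K) (hsummμ.mul_right K) hnormle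
  have hnormsum : Summable (fun k => ‖μ ^ k • v k‖) :=
    Summable.of_nonneg_of_le (fun k => norm_nonneg _) hnormle (hsummμ.mul_right K)
  set U : X := (1 - μ) • ∑' k, μ ^ k • v k with hU_def
  refine ⟨p, hpA, -U, ?_, ?_, ?_⟩
  · -- norm bound
    rw [norm_neg, hU_def, norm_smul, Real.norm_eq_abs, abs_of_pos h1μ]
    have h1 : ‖∑' k, μ ^ k • v k‖ ≤ ∑' k, ‖μ ^ k • v k‖ := norm_tsum_le_tsum_norm hnormsum
    have h2 : ∑' k, ‖μ ^ k • v k‖ ≤ ∑' k, μ ^ k * K :=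
      Summable.tsum_le_tsum hnormle hnormsum (hsummμ.mul_right K)
    have h3 : ∑' k : ℕ, μ ^ k * K = (1 - μ)⁻¹ * K := by
      rw [tsum_mul_right, tsum_geometric_of_lt_one hμnn hμ1]
    have h4 : ‖∑' k, μ ^ k • v k‖ ≤ (1 - μ)⁻¹ * K := by
      rw [← h3]; linarith
    have h5 : (1 - μ) * ((1 - μ)⁻¹ * K) = K := by field_simp
    calc (1 - μ) * ‖∑' k, μ ^ k • v k‖ ≤ (1 - μ) * ((1 - μ)⁻¹ * K) :=
          mul_le_mul_of_nonneg_left h4 h1μ.le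
      _ = K := h5
  · -- budget
    have h1 : Φ xs 0 p = f p + (1 - μ) * (K * (Real.sqrt (‖p - xb‖ ^ 2 + a ^ 2) - a)) := by
      simp only [hΦ_def, zero_add, Finset.sum_range_one, pow_zero, one_mul, hxs0, hG_def]
    rw [h1] at hbudget0
    linarith
  · -- subgradient inequality
    intro x hx
    have hmin' := hmin x hx
    have hTay : ∀ k, μ ^ k * G (x - xs k) - μ ^ k * G (p - xs k)
        ≤ μ ^ k * (inner ℝ (v k) (x - p) : ℝ) + μ ^ k * (K / a * ‖x - p‖ ^ 2) := by
      intro k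
      have h1 := sqrt_taylor a ha (p - xs k) (x - p)
      rw [show p - xs k + (x - p) = x - xs k from by abel] at h1
      have h3 : (inner ℝ (v k) (x - p) : ℝ)
          = K / Real.sqrt (‖p - xs k‖ ^ 2 + a ^ 2) * (inner ℝ (p - xs k) (x - p) : ℝ) := by
        simp only [hv_def]
        exact real_inner_smul_left _ _ _
      have h2 := mul_le_mul_of_nonneg_left h1 (mul_nonneg (pow_nonneg hμnn k) hK.le)
      have e1 : μ ^ k * G (x - xs k) - μ ^ k * G (p - xs k)
          = μ ^ k * K * (Real.sqrt (‖x - xs k‖ ^ 2 + a ^ 2)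
            - Real.sqrt (‖p - xs k‖ ^ 2 + a ^ 2)) := by
        simp only [hG_def]
        ring
      have e2 : μ ^ k * (K / Real.sqrt (‖p - xs k‖ ^ 2 + a ^ 2)
            * (inner ℝ (p - xs k) (x - p) : ℝ)) + μ ^ k * (K / a * ‖x - p‖ ^ 2)
          = μ ^ k * K * ((inner ℝ (p - xs k) (x - p) : ℝ)
            / Real.sqrt (‖p - xs k‖ ^ 2 + a ^ 2) + ‖x - p‖ ^ 2 / a) := by
        ring
      rw [e1, h3]
      linarith [h2, e2.le, e2.symm.le]
    have hsumL : Summable (fun k => μ ^ k * G (x - xs k) - μ ^ k * G (p - xs k)) :=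
      (hsumG x).sub (hsumG p)
    have hsumI : Summable (fun k => μ ^ k * (inner ℝ (v k) (x - p) : ℝ)) := by
      apply Summable.of_norm_bounded (g := fun k => μ ^ k * (K * ‖x - p‖))
        (hsummμ.mul_right _)
      intro k
      rw [Real.norm_eq_abs, abs_mul, abs_of_nonneg (pow_nonneg hμnn k)]
      apply mul_le_mul_of_nonneg_left _ (pow_nonneg hμnn k)
      calc |(inner ℝ (v k) (x - p) : ℝ)| ≤ ‖v k‖ * ‖x - p‖ := abs_real_inner_le_norm _ _
        _ ≤ K * ‖x - p‖ := mul_le_mul_of_nonneg_right (hvnorm k) (norm_nonneg _)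
    have hsumC : Summable (fun k : ℕ => μ ^ k * (K / a * ‖x - p‖ ^ 2)) := hsummμ.mul_right _
    have hts := Summable.tsum_le_tsum hTay hsumL (hsumI.add hsumC)
    rw [Summable.tsum_sub (hsumG x) (hsumG p), Summable.tsum_add hsumI hsumC] at hts
    have hiTs : ∑' k, μ ^ k * (inner ℝ (v k) (x - p) : ℝ)
        = (inner ℝ (∑' k, μ ^ k • v k) (x - p) : ℝ) := by
      calc ∑' k, μ ^ k * (inner ℝ (v k) (x - p) : ℝ)
          = ∑' k, ((innerSL ℝ).flip (x - p)) (μ ^ k • v k) := by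
            apply tsum_congr
            intro k
            simp only [ContinuousLinearMap.flip_apply, innerSL_apply_apply, real_inner_smul_left]
        _ = ((innerSL ℝ).flip (x - p)) (∑' k, μ ^ k • v k) :=
            (ContinuousLinearMap.map_tsum _ hsumv).symm
        _ = (inner ℝ (∑' k, μ ^ k • v k) (x - p) : ℝ) := by
            simp only [ContinuousLinearMap.flip_apply, innerSL_apply_apply]
    have hCs : ∑' k : ℕ, μ ^ k * (K / a * ‖x - p‖ ^ 2)
        = (1 - μ)⁻¹ * (K / a * ‖x - p‖ ^ 2) := by
      rw [tsum_mul_right, tsum_geometric_of_lt_one hμnn hμ1, mul_comm]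
    rw [hiTs, hCs] at hts
    have hmin2 : f p - f x ≤ (1 - μ) * ∑' k, μ ^ k * G (x - xs k)
        - (1 - μ) * ∑' k, μ ^ k * G (p - xs k) := by
      simp only [hΨ_def] at hmin'
      linarith
    have h8 := mul_le_mul_of_nonneg_left hts h1μ.le
    have e3 : (1 - μ) * (∑' k, μ ^ k * G (x - xs k) - ∑' k, μ ^ k * G (p - xs k))
        = (1 - μ) * ∑' k, μ ^ k * G (x - xs k)
          - (1 - μ) * ∑' k, μ ^ k * G (p - xs k) := by ring
    have e4 : (1 - μ) * ((inner ℝ (∑' k, μ ^ k • v k) (x - p) : ℝ)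
          + (1 - μ)⁻¹ * (K / a * ‖x - p‖ ^ 2))
        = (1 - μ) * (inner ℝ (∑' k, μ ^ k • v k) (x - p) : ℝ)
          + (1 - μ) * ((1 - μ)⁻¹ * (K / a * ‖x - p‖ ^ 2)) := by ring
    have h9 : (1 - μ) * ((1 - μ)⁻¹ * (K / a * ‖x - p‖ ^ 2)) = K / a * ‖x - p‖ ^ 2 := by
      field_simp
    have h10 : (inner ℝ (-U) (x - p) : ℝ)
        = -((1 - μ) * (inner ℝ (∑' k, μ ^ k • v k) (x - p) : ℝ)) := by
      rw [hU_def, inner_neg_left, real_inner_smul_left]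
    rw [h10]
    linarith [hmin2, h8, e3.le, e3.symm.le, e4.le, e4.symm.le, h9.le, h9.symm.le]

/-- a sufficient dual condition for distance decrease in a Hilbert
space; powers are real powers (`rpow`). -/
theorem stmt17 {X : Type*} [NormedAddCommGroup X] [InnerProductSpace ℝ X]
    [CompleteSpace X]
    (A : Set X) (hA : IsClosed A) (xbar : X) (hxbar : xbar ∈ A)
    (δ lam q : ℝ) (hδ : 0 < δ) (hlam : 0 < lam) (hq : 0 < q)
    (b : X) (hb : b ∉ A)
    (hcond : ∀ a ∈ A ∩ Metric.ball xbar lam,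
      ‖b - a‖ ^ q < (Metric.infDist b A) ^ q + q * lam * δ →
      δ ≤ ‖b - a‖ ^ (q - 2) * Metric.infDist (b - a) (frechetNormal A a)) :
    (Metric.infDist b A) ^ q ≤ ‖b - xbar‖ ^ q - q * lam * δ := by
  by_contra hcon
  push_neg at hcon
  set d := Metric.infDist b A with hd_def
  have hAne : A.Nonempty := ⟨xbar, hxbar⟩
  have hd : 0 < d := (hA.notMem_iff_infDist_pos hAne).mp hb
  -- the objective function
  set f : X → ℝ := fun x => ‖b - x‖ ^ q with hf_def
  have hf : Continuous f := by
    apply Continuous.rpow_const (by continuity)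
    exact fun x => Or.inr hq.le
  have hf0 : ∀ x, 0 ≤ f x := fun x => Real.rpow_nonneg (norm_nonneg _) q
  have hflb : ∀ x ∈ A, d ^ q ≤ f x := by
    intro x hx
    apply Real.rpow_le_rpow (Metric.infDist_nonneg) _ hq.le
    rw [← dist_eq_norm]
    exact Metric.infDist_le_dist_of_mem hx
  -- parameters
  set ε0 : ℝ := ‖b - xbar‖ ^ q - d ^ q with hε0_def
  have hε0nn : 0 ≤ ε0 := by have := hflb xbar hxbar; simp only [hf_def] at this; linarith
  have hε0 : ε0 < q * lam * δ := by linarith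
  obtain ⟨e, he1, he2⟩ : ∃ e, ε0 < e ∧ e < q * lam * δ :=
    ⟨(ε0 + q * lam * δ) / 2, by linarith, by linarith⟩
  have hepos : 0 < e := lt_of_le_of_lt hε0nn he1
  have hqδ : 0 < q * δ := by positivity
  obtain ⟨K, hKpos, hKlt, hKe⟩ : ∃ K, 0 < K ∧ K < q * δ ∧ e < K * lam := by
    refine ⟨(q * δ + e / lam) / 2, ?_, ?_, ?_⟩
    · have : 0 < e / lam := by positivity
      linarith
    · have : e / lam < q * δ := by rw [div_lt_iff₀ hlam]; linarith
      linarith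
    · have h1 : (q * δ + e / lam) / 2 * lam = (q * δ * lam + e) / 2 := by field_simp
      rw [h1]; nlinarith
  obtain ⟨a, hapos, haK, halam⟩ : ∃ a, 0 < a ∧ K * a ≤ (K * lam - e) / 2 ∧ a ≤ lam / 2 := by
    have hpos : 0 < (K * lam - e) / 2 / K := div_pos (by linarith) hKpos
    refine ⟨min (lam / 2) ((K * lam - e) / 2 / K), lt_min (by linarith) hpos, ?_,
      min_le_left _ _⟩
    have h1 : min (lam / 2) ((K * lam - e) / 2 / K) ≤ (K * lam - e) / 2 / K := min_le_right _ _
    calc K * min (lam / 2) ((K * lam - e) / 2 / K) ≤ K * ((K * lam - e) / 2 / K) := by nlinarith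
      _ = (K * lam - e) / 2 := by field_simp
  obtain ⟨μ, hμ0, hμ1, hμg⟩ : ∃ μ, 0 < μ ∧ μ < 1 ∧ μ * (K * lam) ≤ (K * lam - e) / 2 := by
    have hKl : 0 < K * lam := by positivity
    have hpos : 0 < (K * lam - e) / 2 / (K * lam) := div_pos (by linarith) hKl
    refine ⟨min (1 / 2) ((K * lam - e) / 2 / (K * lam)), lt_min (by norm_num) hpos,
      lt_of_le_of_lt (min_le_left _ _) (by norm_num), ?_⟩
    have h1 : min (1 / 2) ((K * lam - e) / 2 / (K * lam)) ≤ (K * lam - e) / 2 / (K * lam) :=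
      min_le_right _ _
    calc min (1 / 2) ((K * lam - e) / 2 / (K * lam)) * (K * lam)
        ≤ (K * lam - e) / 2 / (K * lam) * (K * lam) := by nlinarith
      _ = (K * lam - e) / 2 := by field_simp
  obtain ⟨c0, hc0, hc0e⟩ : ∃ c0, 0 < c0 ∧ ε0 + c0 < e := ⟨(e - ε0) / 2, by linarith, by linarith⟩
  have h1μ : 0 < 1 - μ := by linarith
  -- apply the variational principle
  obtain ⟨p, hpA, u, hu, hbudget, hineq⟩ :=
    bp_main A hA xbar hxbar f hf hf0 K a μ c0 hKpos hapos hμ0 hμ1 hc0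
  have hfxbar : f xbar = d ^ q + ε0 := by simp only [hf_def, hε0_def]; ring
  have hsq1 := (lipschitz_sqrt_aux a hapos (p - xbar)).1
  have hsq2 := (lipschitz_sqrt_aux a hapos (p - xbar)).2
  have hpen_nn : 0 ≤ (1 - μ) * (K * (Real.sqrt (‖p - xbar‖ ^ 2 + a ^ 2) - a)) :=
    mul_nonneg h1μ.le (mul_nonneg hKpos.le (by linarith))
  have hbud2 : f p + (1 - μ) * (K * (Real.sqrt (‖p - xbar‖ ^ 2 + a ^ 2) - a))
      ≤ d ^ q + ε0 + c0 := by rw [hfxbar] at hbudget; linarith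
  have hptrap : (1 - μ) * (K * (Real.sqrt (‖p - xbar‖ ^ 2 + a ^ 2) - a)) ≤ ε0 + c0 := by
    have := hflb p hpA; linarith
  have htrap2 : e ≤ (1 - μ) * (K * (lam - a)) := by
    have expand : (1 - μ) * (K * (lam - a))
        = K * lam - K * a - μ * (K * lam) + μ * (K * a) := by ring
    have hμKa : 0 ≤ μ * (K * a) := by positivity
    linarith
  have hprod : 0 < (1 - μ) * K := mul_pos h1μ hKpos
  have hpball : ‖p - xbar‖ < lam := by
    have hlt : ((1 - μ) * K) * (Real.sqrt (‖p - xbar‖ ^ 2 + a ^ 2) - a)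
        < ((1 - μ) * K) * (lam - a) := by
      have e1 : ((1 - μ) * K) * (Real.sqrt (‖p - xbar‖ ^ 2 + a ^ 2) - a)
          = (1 - μ) * (K * (Real.sqrt (‖p - xbar‖ ^ 2 + a ^ 2) - a)) := by ring
      have e2 : ((1 - μ) * K) * (lam - a) = (1 - μ) * (K * (lam - a)) := by ring
      rw [e1, e2]; linarith
    have hs := lt_of_mul_lt_mul_left hlt hprod.le
    linarith
  -- value bound at p
  have hfp : f p < d ^ q + q * lam * δ := by linarith
  -- apply the dual condition at p
  have hp_mem : p ∈ A ∩ Metric.ball xbar lam := ⟨hpA, by rwa [Metric.mem_ball, dist_eq_norm]⟩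
  have hmain := hcond p hp_mem hfp
  -- derivative of f at p
  set r : ℝ := ‖b - p‖ with hr_def
  have hbp : b - p ≠ 0 := sub_ne_zero.mpr (fun h => hb (h ▸ hpA))
  have hr : 0 < r := by simpa [hr_def] using norm_pos_iff.mpr hbp
  have hrq : 0 < r ^ (q - 2) := Real.rpow_pos_of_pos hr _
  -- derivative of f at p
  have hpow2 : ∀ y : X, ((‖y‖ ^ 2 : ℝ)) ^ (q / 2) = ‖y‖ ^ q := by
    intro y
    rw [← Real.rpow_natCast ‖y‖ 2, ← Real.rpow_mul (norm_nonneg y)]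
    congr 1
    push_cast
    ring
  have hcoef : ((‖b - p‖ ^ 2 : ℝ)) ^ (q / 2 - 1) = r ^ (q - 2) := by
    rw [← Real.rpow_natCast ‖b - p‖ 2, ← Real.rpow_mul (norm_nonneg _)]
    rw [hr_def]
    congr 1
    ring
  obtain ⟨D, hfd, hDval⟩ : ∃ D : X →L[ℝ] ℝ, HasFDerivAt f D p ∧
      ∀ v : X, D v = -(q * r ^ (q - 2) * (inner ℝ (b - p) v : ℝ)) := by
    have h0 : HasFDerivAt (fun x : X => b - x) (-(ContinuousLinearMap.id ℝ X)) p := by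
      simpa using (hasFDerivAt_id p).const_sub b
    have h2 := h0.norm_sq
    have h3 := h2.rpow_const (p := q / 2) (Or.inl (by positivity))
    have hfeq : f = fun x : X => ((‖b - x‖ ^ 2 : ℝ)) ^ (q / 2) :=
      funext fun y => (hpow2 (b - y)).symm
    rw [← hfeq] at h3
    refine ⟨_, h3, fun v => ?_⟩
    simp only [ContinuousLinearMap.smul_apply, ContinuousLinearMap.comp_apply,
      ContinuousLinearMap.neg_apply, ContinuousLinearMap.id_apply, innerSL_apply_apply,
      inner_neg_right, smul_eq_mul, nsmul_eq_mul, hcoef]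
    push_cast
    ring
  -- the candidate normal vector
  set w : X := (q * r ^ (q - 2)) • (b - p) + u with hw_def
  have hwN : w ∈ frechetNormal A p := by
    intro ε hε
    have hεa : 0 < ε * a / (2 * K) := by positivity
    obtain ⟨η1, hη1, hball⟩ := Metric.eventually_nhds_iff.mp
      ((Asymptotics.isLittleO_iff.mp hfd.isLittleO) (show (0:ℝ) < ε / 2 by positivity))
    refine ⟨min η1 (ε * a / (2 * K)), lt_min hη1 hεa, fun x hxA hxne hxd => ?_⟩
    have hxd1 : ‖x - p‖ < η1 := lt_of_lt_of_le hxd (min_le_left _ _)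
    have hxd2 : ‖x - p‖ ≤ ε * a / (2 * K) := le_of_lt (lt_of_lt_of_le hxd (min_le_right _ _))
    have hlo := hball (show dist x p < η1 by rwa [dist_eq_norm])
    rw [Real.norm_eq_abs, abs_le] at hlo
    have hDxp := hDval (x - p)
    have h1 : q * r ^ (q - 2) * (inner ℝ (b - p) (x - p) : ℝ)
        ≤ f p - f x + ε / 2 * ‖x - p‖ := by
      have := hlo.2
      rw [hDxp] at this
      linarith
    have h2 : (inner ℝ u (x - p) : ℝ) ≤ f x - f p + ε / 2 * ‖x - p‖ := by
      have h3 := hineq x hxA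
      have h4 : K / a * ‖x - p‖ ^ 2 ≤ ε / 2 * ‖x - p‖ := by
        have h5 : K / a * ‖x - p‖ ≤ ε / 2 := by
          rw [div_mul_eq_mul_div, div_le_iff₀ hapos]
          calc K * ‖x - p‖ ≤ K * (ε * a / (2 * K)) :=
                mul_le_mul_of_nonneg_left hxd2 hKpos.le
            _ = ε / 2 * a := by field_simp
        calc K / a * ‖x - p‖ ^ 2 = (K / a * ‖x - p‖) * ‖x - p‖ := by ring
          _ ≤ ε / 2 * ‖x - p‖ := mul_le_mul_of_nonneg_right h5 (norm_nonneg _)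
      linarith
    have hwval : (inner ℝ w (x - p) : ℝ)
        = q * r ^ (q - 2) * (inner ℝ (b - p) (x - p) : ℝ) + (inner ℝ u (x - p) : ℝ) := by
      rw [hw_def, inner_add_left, real_inner_smul_left]
    rw [hwval]
    linarith
  -- scaling and contradiction
  have hqr : 0 < q * r ^ (q - 2) := by positivity
  set t : ℝ := (q * r ^ (q - 2))⁻¹ with ht_def
  have ht : 0 < t := inv_pos.mpr hqr
  have htw : t • w ∈ frechetNormal A p := frechetNormal_smul hwN ht
  have hdist : Metric.infDist (b - p) (frechetNormal A p) ≤ t * K := by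
    have h1 : Metric.infDist (b - p) (frechetNormal A p) ≤ dist (b - p) (t • w) :=
      Metric.infDist_le_dist_of_mem htw
    have h2 : dist (b - p) (t • w) = ‖t • u‖ := by
      rw [dist_eq_norm]
      have h3 : (b - p) - t • w = -(t • u) := by
        rw [hw_def, smul_add, smul_smul, ht_def, inv_mul_cancel₀ hqr.ne', one_smul]
        abel
      rw [h3, norm_neg]
    have h4 : ‖t • u‖ ≤ t * K := by
      rw [norm_smul, Real.norm_eq_abs, abs_of_pos ht]
      exact mul_le_mul_of_nonneg_left hu ht.le
    linarith
  have hfinal : δ ≤ K / q := by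
    have h1 := hmain
    have h2 : r ^ (q - 2) * Metric.infDist (b - p) (frechetNormal A p)
        ≤ r ^ (q - 2) * (t * K) := mul_le_mul_of_nonneg_left hdist hrq.le
    have h3 : r ^ (q - 2) * (t * K) = K / q := by
      rw [ht_def]
      field_simp
    linarith
  have hcontr : K / q < δ := by
    rw [div_lt_iff₀ hq]
    linarith
  linarith
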